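/- arXiv:1908.04433 — 3 statements merged into one kernel-verified Lean document; each statement's English description precedes it below -/
import Mathlib

section
/- For a convex function ℓ:ℝ→ℝ, the partial derivative of the Moreau envelope M_ℓ(x;λ) with respect to λ equals -(x - prox_ℓ(x;λ))²/(2λ²). -/
/-- The Moreau envelope `M_ℓ(x; λ) = inf_v (1/(2λ)) (x - v)^2 + ℓ v`. -/
noncomputable def moreau (ℓ : ℝ → ℝ) (lam x : ℝ) : ℝ :=
  ⨅ v : ℝ, (1 / (2 * lam)) * (x - v) ^ 2 + ℓ v

/-- For a convex function ℓ : ℝ → ℝ, the partial derivative of the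
Moreau envelope `M_ℓ(x; λ)` with respect to `λ` equals
`-(x - prox_ℓ(x; λ))^2 / (2 λ^2)`, where `prox_ℓ(x; λ)` is the minimizer of
`v ↦ (1/(2λ))(x - v)^2 + ℓ v`. -/
theorem moreau_hasDerivAt_lam
    (ℓ : ℝ → ℝ) (hℓ : ConvexOn ℝ Set.univ ℓ)
    (lam : ℝ) (hlam : 0 < lam) (x : ℝ)
    (prox : ℝ)
    (hprox : IsMinOn (fun v : ℝ => (1 / (2 * lam)) * (x - v) ^ 2 + ℓ v)
      Set.univ prox) :
    HasDerivAt (fun l : ℝ => moreau ℓ l x)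
      (-(x - prox) ^ 2 / (2 * lam ^ 2)) lam := by
  set s₀ : ℝ := 1 / (2 * lam) with hs₀def
  have hs₀ : 0 < s₀ := by positivity
  set Mt : ℝ → ℝ := fun s => ⨅ v : ℝ, s * (x - v) ^ 2 + ℓ v with hMt
  have hmin : ∀ v : ℝ, s₀ * (x - prox) ^ 2 + ℓ prox ≤ s₀ * (x - v) ^ 2 + ℓ v := by
    intro v
    exact hprox (Set.mem_univ v)
  -- quadratic growth at the minimizer (strong convexity of the quadratic part)
  have hqg : ∀ v : ℝ, s₀ * (x - prox) ^ 2 + ℓ prox + (s₀ / 2) * (v - prox) ^ 2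
      ≤ s₀ * (x - v) ^ 2 + ℓ v := by
    intro v
    have h1 := hmin ((v + prox) / 2)
    have h2 := hℓ.2 (Set.mem_univ v) (Set.mem_univ prox)
      (by norm_num : (0:ℝ) ≤ 1/2) (by norm_num : (0:ℝ) ≤ 1/2) (by norm_num)
    simp only [smul_eq_mul] at h2 ⊢
    have e : (1/2 : ℝ) * v + (1/2 : ℝ) * prox = (v + prox) / 2 := by ring
    rw [e] at h2
    nlinarith [h1, h2, hs₀]
  set C : ℝ := 4 * (x - prox) ^ 2 / s₀ with hCdef
  have hC : C * s₀ = 4 * (x - prox) ^ 2 := by rw [hCdef]; field_simp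
  have hCnn : 0 ≤ C := by positivity
  -- pointwise lower bound for s near s₀
  have key : ∀ s : ℝ, |s - s₀| ≤ s₀ / 4 → ∀ v : ℝ,
      (s₀ * (x - prox) ^ 2 + ℓ prox) + (s - s₀) * (x - prox) ^ 2 - C * (s - s₀) ^ 2
        ≤ s * (x - v) ^ 2 + ℓ v := by
    intro s hs v
    have habs := abs_le.mp hs
    have hq := hqg v
    have hC2 : C * (s - s₀) ^ 2 * s₀ = 4 * (x - prox) ^ 2 * (s - s₀) ^ 2 := by
      rw [mul_right_comm, hC]
    rw [← mul_le_mul_iff_of_pos_right hs₀]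
    nlinarith [sq_nonneg (s₀/2 * (v - prox) - 2 * (s - s₀) * (x - prox)),
      mul_nonneg (mul_nonneg hs₀.le (by linarith [habs.1] : (0:ℝ) ≤ (s - s₀) + s₀/4))
        (sq_nonneg (v - prox)),
      mul_le_mul_of_nonneg_right hq hs₀.le, hC2]
  have hbdd : ∀ s : ℝ, |s - s₀| ≤ s₀ / 4 →
      BddBelow (Set.range fun v : ℝ => s * (x - v) ^ 2 + ℓ v) := by
    intro s hs
    refine ⟨s₀ * (x - prox) ^ 2 + ℓ prox + (s - s₀) * (x - prox) ^ 2 - C * (s - s₀) ^ 2, ?_⟩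
    rintro y ⟨v, rfl⟩
    exact key s hs v
  have hmem : |s₀ - s₀| ≤ s₀ / 4 := by simp; positivity
  have hM0 : Mt s₀ = s₀ * (x - prox) ^ 2 + ℓ prox := by
    apply le_antisymm
    · exact ciInf_le (hbdd s₀ hmem) prox
    · exact le_ciInf fun v => hmin v
  -- the two-sided squeeze
  have hsq : ∀ s : ℝ, |s - s₀| ≤ s₀ / 4 →
      |Mt s - Mt s₀ - (s - s₀) * (x - prox) ^ 2| ≤ C * (s - s₀) ^ 2 := by
    intro s hs
    rw [abs_le]
    constructor
    · have hl : Mt s₀ + (s - s₀) * (x - prox) ^ 2 - C * (s - s₀) ^ 2 ≤ Mt s := by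
        rw [hM0]
        exact le_ciInf (key s hs)
      linarith
    · have h1 : Mt s ≤ s * (x - prox) ^ 2 + ℓ prox := ciInf_le (hbdd s hs) prox
      rw [hM0]
      nlinarith [h1, mul_nonneg hCnn (sq_nonneg (s - s₀))]
  -- derivative of Mt at s₀
  have hMt' : HasDerivAt Mt ((x - prox) ^ 2) s₀ := by
    rw [hasDerivAt_iff_isLittleO]
    have hbig : (fun s : ℝ => Mt s - Mt s₀ - (s - s₀) • (x - prox) ^ 2)
        =O[nhds s₀] fun s => (s - s₀) ^ 2 := by
      apply Asymptotics.IsBigO.of_bound C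
      have hev : ∀ᶠ s in nhds s₀, |s - s₀| ≤ s₀ / 4 := by
        have ht : Filter.Tendsto (fun s : ℝ => |s - s₀|) (nhds s₀) (nhds 0) := by
          have h0 : Filter.Tendsto (fun s : ℝ => s - s₀) (nhds s₀) (nhds 0) := by
            simpa using (Filter.tendsto_id (x := nhds s₀)).sub_const s₀
          simpa using h0.abs
        exact ht.eventually_le_const (by positivity)
      filter_upwards [hev] with s hs
      have h := hsq s hs
      simp only [smul_eq_mul]
      calc ‖Mt s - Mt s₀ - (s - s₀) * (x - prox) ^ 2‖ ≤ C * (s - s₀) ^ 2 := by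
            rw [Real.norm_eq_abs]; exact h
        _ ≤ C * ‖(s - s₀) ^ 2‖ := by
            rw [Real.norm_eq_abs, abs_of_nonneg (sq_nonneg _)]
    refine hbig.trans_isLittleO ?_
    have h1 : (fun s : ℝ => s - s₀) =o[nhds s₀] fun _ : ℝ => (1:ℝ) := by
      rw [Asymptotics.isLittleO_one_iff]
      simpa using (Filter.tendsto_id (x := nhds s₀)).sub_const s₀
    have h2 := h1.mul_isBigO (Asymptotics.isBigO_refl (fun s : ℝ => s - s₀) (nhds s₀))
    simpa [sq] using h2
  -- chain rule with l ↦ 1/(2l)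
  have hinv : HasDerivAt (fun l : ℝ => 1 / (2 * l)) (-(1 / (2 * lam ^ 2))) lam := by
    have h : HasDerivAt (fun l : ℝ => 2 * l) 2 lam := by
      simpa using (hasDerivAt_id lam).const_mul (2:ℝ)
    have h2 := h.inv (by positivity : (2:ℝ) * lam ≠ 0)
    have e1 : (fun l : ℝ => 1 / (2 * l)) = fun y : ℝ => (2 * y)⁻¹ := by
      funext y; rw [one_div]
    have e2 : -(1 / (2 * lam ^ 2)) = -2 / (2 * lam) ^ 2 := by
      field_simp
    rw [e1, e2]; exact h2
  have hcomp := hMt'.comp lam hinv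
  have efun : (fun l : ℝ => moreau ℓ l x) = Mt ∘ fun l : ℝ => 1 / (2 * l) := by
    funext l
    rfl
  rw [efun]
  convert hcomp using 1
  case e'_9 => ring
  all_goals rfl
end

section
/- If ℓ:ℝ→ℝ is convex and differentiable, then the x-derivative of the Moreau envelope satisfies ∂M_ℓ(x;λ)/∂x = ℓ'(prox_ℓ(x;λ)), and the λ-derivative satisfies ∂M_ℓ(x;λ)/∂λ = -(1/2)(ℓ'(prox_ℓ(x;λ)))². -/
section aux

variable (ℓ ℓ' : ℝ → ℝ)

lemma moreau_aux_eq (prox : ℝ → ℝ → ℝ)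
    (hprox : ∀ x' l' : ℝ, 0 < l' →
      IsMinOn (fun v : ℝ => (1 / (2 * l')) * (x' - v) ^ 2 + ℓ v)
        Set.univ (prox x' l'))
    (x l : ℝ) (hl : 0 < l) :
    moreau ℓ l x = (1 / (2 * l)) * (x - prox x l) ^ 2 + ℓ (prox x l) := by
  have hmin := hprox x l hl
  have hle : ∀ v : ℝ, (1 / (2 * l)) * (x - prox x l) ^ 2 + ℓ (prox x l)
      ≤ (1 / (2 * l)) * (x - v) ^ 2 + ℓ v := fun v =>
    isMinOn_iff.mp hmin v (Set.mem_univ v)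
  have hbdd : BddBelow (Set.range fun v : ℝ => (1 / (2 * l)) * (x - v) ^ 2 + ℓ v) := by
    refine ⟨(1 / (2 * l)) * (x - prox x l) ^ 2 + ℓ (prox x l), ?_⟩
    rintro _ ⟨v, rfl⟩
    exact hle v
  exact le_antisymm (ciInf_le hbdd (prox x l)) (le_ciInf hle)

lemma moreau_aux_le (prox : ℝ → ℝ → ℝ)
    (hprox : ∀ x' l' : ℝ, 0 < l' →
      IsMinOn (fun v : ℝ => (1 / (2 * l')) * (x' - v) ^ 2 + ℓ v)
        Set.univ (prox x' l'))
    (x l v : ℝ) (hl : 0 < l) :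
    moreau ℓ l x ≤ (1 / (2 * l)) * (x - v) ^ 2 + ℓ v := by
  have hmin := hprox x l hl
  have hbdd : BddBelow (Set.range fun v : ℝ => (1 / (2 * l)) * (x - v) ^ 2 + ℓ v) := by
    refine ⟨(1 / (2 * l)) * (x - prox x l) ^ 2 + ℓ (prox x l), ?_⟩
    rintro _ ⟨v, rfl⟩
    exact isMinOn_iff.mp hmin v (Set.mem_univ v)
  exact ciInf_le hbdd v

lemma moreau_aux_foc (hdiff : ∀ t : ℝ, HasDerivAt ℓ (ℓ' t) t)
    (prox : ℝ → ℝ → ℝ)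
    (hprox : ∀ x' l' : ℝ, 0 < l' →
      IsMinOn (fun v : ℝ => (1 / (2 * l')) * (x' - v) ^ 2 + ℓ v)
        Set.univ (prox x' l'))
    (x l : ℝ) (hl : 0 < l) :
    ℓ' (prox x l) = (x - prox x l) / l := by
  set p := prox x l with hp
  have hmin := hprox x l hl
  have hloc : IsLocalMin (fun v : ℝ => (1 / (2 * l)) * (x - v) ^ 2 + ℓ v) p :=
    hmin.isLocalMin Filter.univ_mem
  have h1 : HasDerivAt (fun v : ℝ => x - v) (-1) p := by
    simpa using (hasDerivAt_id p).const_sub x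
  have h2 : HasDerivAt (fun v : ℝ => (x - v) ^ 2) ((2 : ℕ) * (x - p) ^ 1 * (-1)) p :=
    h1.pow 2
  have h3 : HasDerivAt (fun v : ℝ => (1 / (2 * l)) * (x - v) ^ 2 + ℓ v)
      ((1 / (2 * l)) * ((2 : ℕ) * (x - p) ^ 1 * (-1)) + ℓ' p) p :=
    (h2.const_mul _).add (hdiff p)
  have h0 := hloc.hasDerivAt_eq_zero h3
  have hl' : (l : ℝ) ≠ 0 := ne_of_gt hl
  field_simp at h0 ⊢
  push_cast at h0
  linarith

lemma moreau_aux_mono (hℓ : ConvexOn ℝ Set.univ ℓ)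
    (hdiff : ∀ t : ℝ, HasDerivAt ℓ (ℓ' t) t) : Monotone ℓ' := by
  intro a b hab
  have h := hℓ.monotoneOn_deriv (fun t _ => (hdiff t).differentiableAt)
    (Set.mem_univ a) (Set.mem_univ b) hab
  rwa [(hdiff a).deriv, (hdiff b).deriv] at h

/-- monotonicity of ℓ' as product inequality -/
lemma moreau_aux_mono_mul (hℓ : ConvexOn ℝ Set.univ ℓ)
    (hdiff : ∀ t : ℝ, HasDerivAt ℓ (ℓ' t) t) (a b : ℝ) :
    0 ≤ (ℓ' b - ℓ' a) * (b - a) := by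
  have hmono := moreau_aux_mono ℓ ℓ' hℓ hdiff
  rcases le_total a b with h | h
  · have := hmono h; nlinarith
  · have := hmono h; nlinarith

/-- prox is 1-Lipschitz in x -/
lemma moreau_aux_lip (hℓ : ConvexOn ℝ Set.univ ℓ)
    (hdiff : ∀ t : ℝ, HasDerivAt ℓ (ℓ' t) t)
    (prox : ℝ → ℝ → ℝ)
    (hprox : ∀ x' l' : ℝ, 0 < l' →
      IsMinOn (fun v : ℝ => (1 / (2 * l')) * (x' - v) ^ 2 + ℓ v)
        Set.univ (prox x' l'))
    (x y l : ℝ) (hl : 0 < l) :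
    |prox y l - prox x l| ≤ |y - x| := by
  set p := prox x l
  set q := prox y l
  have h1 : ℓ' p = (x - p) / l := moreau_aux_foc ℓ ℓ' hdiff prox hprox x l hl
  have h2 : ℓ' q = (y - q) / l := moreau_aux_foc ℓ ℓ' hdiff prox hprox y l hl
  have h3 := moreau_aux_mono_mul ℓ ℓ' hℓ hdiff p q
  rw [h1, h2] at h3
  have hl0 : (l : ℝ) ≠ 0 := ne_of_gt hl
  have h5 : 0 ≤ ((y - q) - (x - p)) * (q - p) := by
    have h := mul_nonneg h3 hl.le
    have hexp : ((y - q) / l - (x - p) / l) * (q - p) * l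
        = ((y - q) - (x - p)) * (q - p) := by field_simp
    linarith [hexp ▸ h]
  have h6 : |q - p| * |q - p| ≤ |y - x| * |q - p| := by
    have h4 : (q - p) ^ 2 ≤ (y - x) * (q - p) := by nlinarith
    have h7 : (y - x) * (q - p) ≤ |y - x| * |q - p| := by
      rw [← abs_mul]; exact le_abs_self _
    calc |q - p| * |q - p| = (q - p) ^ 2 := by rw [← sq_abs]; ring
      _ ≤ (y - x) * (q - p) := h4
      _ ≤ |y - x| * |q - p| := h7
  rcases eq_or_lt_of_le (abs_nonneg (q - p)) with h | h
  · rw [← h]; exact abs_nonneg _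
  · exact le_of_mul_le_mul_right h6 h

/-- prox continuity in λ -/
lemma moreau_aux_lam (hℓ : ConvexOn ℝ Set.univ ℓ)
    (hdiff : ∀ t : ℝ, HasDerivAt ℓ (ℓ' t) t)
    (prox : ℝ → ℝ → ℝ)
    (hprox : ∀ x' l' : ℝ, 0 < l' →
      IsMinOn (fun v : ℝ => (1 / (2 * l')) * (x' - v) ^ 2 + ℓ v)
        Set.univ (prox x' l'))
    (x l l' : ℝ) (hl : 0 < l) (hl' : 0 < l') :
    l' * |prox x l' - prox x l| ≤ |l' - l| * |x - prox x l'| := by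
  set p := prox x l
  set q := prox x l'
  have h1 : ℓ' p = (x - p) / l := moreau_aux_foc ℓ ℓ' hdiff prox hprox x l hl
  have h2 : ℓ' q = (x - q) / l' := moreau_aux_foc ℓ ℓ' hdiff prox hprox x l' hl'
  have h3 := moreau_aux_mono_mul ℓ ℓ' hℓ hdiff p q
  rw [h1, h2] at h3
  have hl0 : (l : ℝ) ≠ 0 := ne_of_gt hl
  have hl0' : (l' : ℝ) ≠ 0 := ne_of_gt hl'
  have h' : 0 ≤ (l * (x - q) - l' * (x - p)) * (q - p) := by
    have h := mul_nonneg h3 (mul_pos hl hl').le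
    have hexp : ((x - q) / l' - (x - p) / l) * (q - p) * (l * l')
        = (l * (x - q) - l' * (x - p)) * (q - p) := by field_simp
    linarith [hexp ▸ h]
  have h5 : l' * (q - p) ^ 2 ≤ (l - l') * (x - q) * (q - p) := by nlinarith
  have h6 : (l - l') * (x - q) * (q - p) ≤ |l' - l| * |x - q| * |q - p| := by
    calc (l - l') * (x - q) * (q - p) ≤ |(l - l') * (x - q) * (q - p)| := le_abs_self _
      _ = |l' - l| * |x - q| * |q - p| := by rw [abs_mul, abs_mul, abs_sub_comm]
  rcases eq_or_lt_of_le (abs_nonneg (q - p)) with h | h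
  · rw [← h]; simp
    positivity
  · have h7 : l' * |q - p| * |q - p| ≤ (|l' - l| * |x - q|) * |q - p| := by
      have : l' * ((q - p) ^ 2) = l' * |q - p| * |q - p| := by
        rw [← sq_abs]; ring
      linarith [this ▸ (h5.trans h6)]
    exact le_of_mul_le_mul_right h7 h

end aux

lemma hasDerivAt_of_sq_bound (f : ℝ → ℝ) (x c C : ℝ)
    (h : ∀ᶠ y in nhds x, |f y - f x - c * (y - x)| ≤ C * (y - x) ^ 2) :
    HasDerivAt f c x := by
  rw [hasDerivAt_iff_isLittleO]
  rw [Asymptotics.isLittleO_iff]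
  intro ε hε
  have hC : 0 < max C 1 := lt_of_lt_of_le one_pos (le_max_right _ _)
  have hball : Metric.ball x (ε / max C 1) ∈ nhds x :=
    Metric.ball_mem_nhds x (div_pos hε hC)
  filter_upwards [h, hball] with y h1 h2
  have hd : |y - x| < ε / max C 1 := by
    simpa [Real.dist_eq] using h2
  have h3 : |f y - f x - c * (y - x)| ≤ max C 1 * (y - x) ^ 2 := by
    refine h1.trans ?_
    have := sq_nonneg (y - x)
    nlinarith [le_max_left C 1]
  have h4 : max C 1 * (y - x) ^ 2 ≤ ε * |y - x| := by
    have hsq : (y - x) ^ 2 = |y - x| * |y - x| := by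
      rw [← sq_abs]; ring
    rw [hsq]
    have h5 : max C 1 * |y - x| ≤ ε := by
      rcases le_or_gt (|y - x|) 0 with h | h
      · have : |y - x| = 0 := le_antisymm h (abs_nonneg _)
        simp [this]; positivity
      · calc max C 1 * |y - x| ≤ max C 1 * (ε / max C 1) := by
              apply mul_le_mul_of_nonneg_left hd.le hC.le
          _ = ε := by field_simp
    nlinarith [abs_nonneg (y - x)]
  calc ‖f y - f x - (y - x) • c‖ = |f y - f x - c * (y - x)| := by
        simp [smul_eq_mul]; ring_nf
    _ ≤ ε * |y - x| := h3.trans h4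
    _ = ε * ‖y - x‖ := by simp


set_option maxHeartbeats 1000000

/-- If ℓ : ℝ → ℝ is convex and differentiable with derivative ℓ',
then the x-derivative of the Moreau envelope equals `ℓ'(prox_ℓ(x; λ))` and the
λ-derivative equals `-(1/2) (ℓ'(prox_ℓ(x; λ)))^2`, where `prox_ℓ(x; λ)` is the
unique minimizer of `v ↦ (1/(2λ))(x - v)^2 + ℓ v`. -/
theorem moreau_deriv_of_differentiable
    (ℓ ℓ' : ℝ → ℝ) (hℓ : ConvexOn ℝ Set.univ ℓ)
    (hdiff : ∀ t : ℝ, HasDerivAt ℓ (ℓ' t) t)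
    (x lam : ℝ) (hlam : 0 < lam)
    (prox : ℝ → ℝ → ℝ)
    (hprox : ∀ x' l' : ℝ, 0 < l' →
      IsMinOn (fun v : ℝ => (1 / (2 * l')) * (x' - v) ^ 2 + ℓ v)
        Set.univ (prox x' l')) :
    HasDerivAt (fun x' : ℝ => moreau ℓ lam x') (ℓ' (prox x lam)) x ∧
    HasDerivAt (fun l : ℝ => moreau ℓ l x)
      (-(1 / 2) * (ℓ' (prox x lam)) ^ 2) lam := by
  have hlam0 : (lam : ℝ) ≠ 0 := ne_of_gt hlam
  set p := prox x lam with hp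
  have hfoc : ℓ' p = (x - p) / lam := moreau_aux_foc ℓ ℓ' hdiff prox hprox x lam hlam
  set u : ℝ := 1 / (2 * lam) with hu
  have hupos : 0 < u := by positivity
  have hMx_eq : moreau ℓ lam x = u * (x - p) ^ 2 + ℓ p :=
    moreau_aux_eq ℓ prox hprox x lam hlam
  constructor
  · -- x - derivative
    apply hasDerivAt_of_sq_bound _ x _ (3 * u)
    apply Filter.Eventually.of_forall
    intro y
    set p' := prox y lam with hp'
    have hlip : |p' - p| ≤ |y - x| := moreau_aux_lip ℓ ℓ' hℓ hdiff prox hprox x y lam hlam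
    have he2 : (p' - p) ^ 2 ≤ (y - x) ^ 2 := by
      have := mul_self_le_mul_self (abs_nonneg (p' - p)) hlip
      rw [abs_mul_abs_self, abs_mul_abs_self] at this
      nlinarith
    have hMy_le : moreau ℓ lam y ≤ u * (y - p) ^ 2 + ℓ p :=
      moreau_aux_le ℓ prox hprox y lam p hlam
    have hMy_eq : moreau ℓ lam y = u * (y - p') ^ 2 + ℓ p' :=
      moreau_aux_eq ℓ prox hprox y lam hlam
    have hMx_le : moreau ℓ lam x ≤ u * (x - p') ^ 2 + ℓ p' :=
      moreau_aux_le ℓ prox hprox x lam p' hlam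
    have hc : ℓ' p = 2 * u * (x - p) := by
      rw [hfoc, hu]; field_simp
    rw [hc, abs_le]
    constructor
    · nlinarith [mul_nonneg hupos.le (sq_nonneg ((y - x) - (p' - p))),
        mul_nonneg hupos.le (sq_nonneg ((y - x) + (p' - p))),
        mul_le_mul_of_nonneg_left he2 hupos.le, mul_nonneg hupos.le (sq_nonneg (y - x))]
    · nlinarith [mul_nonneg hupos.le (sq_nonneg (y - x))]
  · -- lam - derivative
    apply hasDerivAt_of_sq_bound _ lam _ (7 * (x - p) ^ 2 / lam ^ 3)
    filter_upwards [Metric.ball_mem_nhds lam (by positivity : (0:ℝ) < lam / 4)] with l hball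
    have hdlt : |l - lam| < lam / 4 := by simpa [Real.dist_eq] using hball
    have habs := abs_lt.mp hdlt
    have hlpos : 0 < l := by linarith
    have hl0 : (l : ℝ) ≠ 0 := ne_of_gt hlpos
    have hl34 : 3 * lam / 4 ≤ l := by linarith
    set q : ℝ := x - p with hq
    set p' := prox x l with hp'2
    set e : ℝ := p' - p with hee
    set d : ℝ := l - lam with hd
    have hq' : x - p' = q - e := by rw [hq, hee]; ring
    clear_value q e d
    -- prox continuity in lam
    have hlamlip : lam * |e| ≤ |d| * |q| := by
      rw [hee, hd, hq, abs_sub_comm p' p, abs_sub_comm l lam]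
      exact moreau_aux_lam ℓ ℓ' hℓ hdiff prox hprox x l lam hlpos hlam
    have he4 : |e| ≤ |q| / 4 := by
      have h1 : lam * |e| ≤ (lam / 4) * |q| := by
        calc lam * |e| ≤ |d| * |q| := hlamlip
          _ ≤ (lam / 4) * |q| := by
              apply mul_le_mul_of_nonneg_right hdlt.le (abs_nonneg _)
      nlinarith [abs_nonneg e, abs_nonneg q]
    -- value of the derivative
    have hc2 : -(1 / 2 : ℝ) * (ℓ' p) ^ 2 = -(q ^ 2 / (2 * lam ^ 2)) := by
      rw [hfoc]
      field_simp
    -- bounds on the envelope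
    have hMl_le : moreau ℓ l x ≤ (1 / (2 * l)) * q ^ 2 + ℓ p := by
      simpa [hq] using moreau_aux_le ℓ prox hprox x l p hlpos
    have hMl_eq : moreau ℓ l x = (1 / (2 * l)) * (q - e) ^ 2 + ℓ p' := by
      rw [← hq']
      exact moreau_aux_eq ℓ prox hprox x l hlpos
    have hMlam_le : moreau ℓ lam x ≤ (1 / (2 * lam)) * (q - e) ^ 2 + ℓ p' := by
      rw [← hq']
      exact moreau_aux_le ℓ prox hprox x lam p' hlam
    have hMlam_eq : moreau ℓ lam x = (1 / (2 * lam)) * q ^ 2 + ℓ p := by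
      rw [hMx_eq, hu, hq]
    rw [hc2, abs_le]
    have hCpos : (0:ℝ) ≤ 7 * q ^ 2 / lam ^ 3 := by positivity
    constructor
    · -- lower bound
      have hlow : moreau ℓ l x - moreau ℓ lam x ≥
          (1 / (2 * l)) * (q - e) ^ 2 - (1 / (2 * lam)) * (q - e) ^ 2 := by
        linarith [hMl_eq, hMlam_le]
      have hidE : (1 / (2 * l)) * (q - e) ^ 2 - (1 / (2 * lam)) * (q - e) ^ 2
          + q ^ 2 * d / (2 * lam ^ 2)
          = d * (d * q ^ 2 + lam * (e * (2 * q - e))) / (2 * l * lam ^ 2) := by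
        rw [hd]; field_simp; ring
      -- numerator bound
      have h2qe : |2 * q - e| ≤ 9 / 4 * |q| := by
        calc |2 * q - e| ≤ |2 * q| + |e| := by
              simpa [sub_eq_add_neg] using abs_add_le (2 * q) (-e)
          _ ≤ 2 * |q| + |q| / 4 := by
              have h2 : |2 * q| = 2 * |q| := by rw [abs_mul]; norm_num
              linarith [he4, h2]
          _ = 9 / 4 * |q| := by ring
      have hnum : d * (d * q ^ 2 + lam * (e * (2 * q - e))) ≥ -(13 / 4) * (d ^ 2 * q ^ 2) := by
        have hprod : (lam * |e|) * |2 * q - e| ≤ (|d| * |q|) * (9 / 4 * |q|) :=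
          mul_le_mul hlamlip h2qe (abs_nonneg _) (by positivity)
        have habs2 : |d * (lam * (e * (2 * q - e)))| ≤ 9 / 4 * (d ^ 2 * q ^ 2) := by
          rw [abs_mul, abs_mul, abs_mul, abs_of_pos hlam]
          calc |d| * (lam * (|e| * |2 * q - e|))
              = |d| * (lam * |e| * |2 * q - e|) := by ring
            _ ≤ |d| * (|d| * |q| * (9 / 4 * |q|)) :=
                mul_le_mul_of_nonneg_left hprod (abs_nonneg d)
            _ = 9 / 4 * ((|d| * |d|) * (|q| * |q|)) := by ring
            _ = 9 / 4 * (d ^ 2 * q ^ 2) := by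
                rw [abs_mul_abs_self, abs_mul_abs_self]; ring
        have hneg := neg_abs_le (d * (lam * (e * (2 * q - e))))
        have hkey : -(9 / 4 * (d ^ 2 * q ^ 2)) ≤ d * (lam * (e * (2 * q - e))) :=
          le_trans (neg_le_neg habs2) hneg
        nlinarith [hkey, mul_nonneg (sq_nonneg d) (sq_nonneg q)]
      have hdenpos : (0:ℝ) < 2 * l * lam ^ 2 := by positivity
      have hfrac : d * (d * q ^ 2 + lam * (e * (2 * q - e))) / (2 * l * lam ^ 2)
          ≥ -(7 * q ^ 2 / lam ^ 3) * d ^ 2 := by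
        have step1 : (-(13 / 4) * (d ^ 2 * q ^ 2)) / (2 * l * lam ^ 2)
            ≤ d * (d * q ^ 2 + lam * (e * (2 * q - e))) / (2 * l * lam ^ 2) :=
          (div_le_div_iff_of_pos_right hdenpos).mpr hnum
        have step2 : -(7 * q ^ 2 / lam ^ 3) * d ^ 2
            ≤ (-(13 / 4) * (d ^ 2 * q ^ 2)) / (2 * l * lam ^ 2) := by
          rw [show -(7 * q ^ 2 / lam ^ 3) * d ^ 2 = (-(7 * q ^ 2 * d ^ 2)) / lam ^ 3 by ring]
          rw [div_le_div_iff₀ (by positivity) hdenpos]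
          have h14 : 13 / 4 * lam ≤ 14 * l := by linarith
          nlinarith [mul_le_mul_of_nonneg_left h14
            (by positivity : (0:ℝ) ≤ q ^ 2 * d ^ 2 * lam ^ 2)]
        linarith
      rw [← hidE] at hfrac
      have : moreau ℓ l x - moreau ℓ lam x + q ^ 2 * d / (2 * lam ^ 2)
          ≥ -(7 * q ^ 2 / lam ^ 3) * d ^ 2 := by
        linarith
      calc -(7 * q ^ 2 / lam ^ 3 * d ^ 2)
          ≤ moreau ℓ l x - moreau ℓ lam x + q ^ 2 * d / (2 * lam ^ 2) := by
            linarith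
        _ = moreau ℓ l x - moreau ℓ lam x - -(q ^ 2 / (2 * lam ^ 2)) * d := by
            ring
    · -- upper bound
      have hup : moreau ℓ l x - moreau ℓ lam x ≤
          (1 / (2 * l)) * q ^ 2 - (1 / (2 * lam)) * q ^ 2 := by
        linarith [hMl_le, hMlam_eq]
      have hidU : (1 / (2 * l)) * q ^ 2 - (1 / (2 * lam)) * q ^ 2 + q ^ 2 * d / (2 * lam ^ 2)
          = q ^ 2 * d ^ 2 / (2 * l * lam ^ 2) := by
        rw [hd]; field_simp; ring
      have hstep : q ^ 2 * d ^ 2 / (2 * l * lam ^ 2) ≤ 7 * q ^ 2 / lam ^ 3 * d ^ 2 := by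
        rw [show 7 * q ^ 2 / lam ^ 3 * d ^ 2 = (7 * q ^ 2 * d ^ 2) / lam ^ 3 by ring]
        rw [div_le_div_iff₀ (by positivity) (by positivity)]
        have h14 : lam ≤ 14 * l := by linarith
        nlinarith [mul_le_mul_of_nonneg_left h14
          (by positivity : (0:ℝ) ≤ q ^ 2 * d ^ 2 * lam ^ 2)]
      calc moreau ℓ l x - moreau ℓ lam x - -(q ^ 2 / (2 * lam ^ 2)) * d
          = moreau ℓ l x - moreau ℓ lam x + q ^ 2 * d / (2 * lam ^ 2) := by
            ring
        _ ≤ q ^ 2 * d ^ 2 / (2 * l * lam ^ 2) := by linarith [hidU]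
        _ ≤ 7 * q ^ 2 / lam ^ 3 * d ^ 2 := hstep
end

section
/- Let G,S ~ N(0,1) be independent and Y = BSC_ε(sign(S)) with ε∈[0,1/2]. For the squared loss ℓ(t)=(t-1)², the system of equations E[YS·ℓ'(prox_ℓ(αG+μSY;λ))]=0, λ²δ·E[ℓ'(prox_ℓ(αG+μSY;λ))²]=α², λδ·E[G·ℓ'(prox_ℓ(αG+μSY;λ))]=α has, for δ>1, the solution μ = (1-2ε)√(2/π), λ = 1/(2(δ-1)), and α² = (1 - (2/π)(1-2ε)²)/(δ-1). -/
open MeasureTheory ProbabilityTheory Real Filter Set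
open scoped ENNReal NNReal

section VolumeIntegrals

lemma sq_atBot' : Tendsto (fun x : ℝ => x ^ 2) atBot atTop := by
  have h1 : Tendsto (fun x : ℝ => |x| ^ 2) atBot atTop :=
    (tendsto_pow_atTop (n := 2) (by norm_num)).comp tendsto_abs_atBot_atTop
  exact h1.congr fun x => sq_abs x

lemma exp_lim_top' : Tendsto (fun x : ℝ => Real.exp (-(1/2) * x^2)) atTop (nhds 0) :=
  Real.tendsto_exp_atBot.comp
    ((tendsto_pow_atTop (n := 2) (by norm_num)).const_mul_atTop_of_neg (by norm_num))

lemma exp_lim_bot' : Tendsto (fun x : ℝ => Real.exp (-(1/2) * x^2)) atBot (nhds 0) :=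
  Real.tendsto_exp_atBot.comp (sq_atBot'.const_mul_atTop_of_neg (by norm_num))

lemma xexp_lim_top' : Tendsto (fun x : ℝ => x * Real.exp (-(1/2) * x^2)) atTop (nhds 0) := by
  have h := (rpow_mul_exp_neg_mul_sq_isLittleO_exp_neg (by norm_num : (0:ℝ) < 1/2) 1).isBigO
  have h2 : Tendsto (fun x : ℝ => Real.exp (-(1/2) * x)) atTop (nhds 0) :=
    Real.tendsto_exp_atBot.comp (tendsto_id.const_mul_atTop_of_neg (by norm_num))
  have := h.trans_tendsto h2
  simpa [Real.rpow_one] using this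

lemma xexp_lim_bot' : Tendsto (fun x : ℝ => x * Real.exp (-(1/2) * x^2)) atBot (nhds 0) := by
  have h : Tendsto (fun x : ℝ => -(x * Real.exp (-(1/2) * x^2))) atTop (nhds 0) := by
    simpa using xexp_lim_top'.neg
  have := h.comp tendsto_neg_atBot_atTop
  simpa [Function.comp_def, neg_neg] using this

lemma hd_exp' (x : ℝ) : HasDerivAt (fun x : ℝ => -Real.exp (-(1/2) * x^2))
    (x * Real.exp (-(1/2) * x^2)) x := by
  have h := (((hasDerivAt_pow 2 x).const_mul (-(1/2) : ℝ)).exp).neg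
  refine h.congr_deriv ?_
  ring

lemma integrable_xexp' : Integrable (fun x : ℝ => x * Real.exp (-(1/2) * x^2)) := by
  simpa using integrable_mul_exp_neg_mul_sq (by norm_num : (0:ℝ) < 1/2)

lemma integrable_sqexp' : Integrable (fun x : ℝ => x ^ 2 * Real.exp (-(1/2) * x^2)) := by
  have := integrable_rpow_mul_exp_neg_mul_sq (by norm_num : (0:ℝ) < 1/2) (s := 2) (by norm_num)
  simpa [Real.rpow_natCast] using this

lemma integrable_expsq' : Integrable (fun x : ℝ => Real.exp (-(1/2) * x^2)) :=
  integrable_exp_neg_mul_sq (by norm_num)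

lemma V0' : ∫ x : ℝ, x * Real.exp (-(1/2) * x^2) = 0 := by
  have := integral_of_hasDerivAt_of_tendsto hd_exp' integrable_xexp'
    (by simpa using exp_lim_bot'.neg) (by simpa using exp_lim_top'.neg)
  simpa using this

lemma VE' : ∫ x : ℝ, Real.exp (-(1/2) * x^2) = Real.sqrt (2 * π) := by
  rw [integral_gaussian]
  rw [show π / (1/2) = 2 * π by ring]

lemma V2' : ∫ x : ℝ, x ^ 2 * Real.exp (-(1/2) * x^2) = Real.sqrt (2 * π) := by
  have hd : ∀ x : ℝ, HasDerivAt (fun x : ℝ => -(x * Real.exp (-(1/2) * x^2)))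
      (x ^ 2 * Real.exp (-(1/2) * x^2) - Real.exp (-(1/2) * x^2)) x := by
    intro x
    have h1 := ((hasDerivAt_pow 2 x).const_mul (-(1/2) : ℝ)).exp
    have h2 := ((hasDerivAt_id x).mul h1).neg
    refine h2.congr_deriv ?_
    simp only [id_eq]
    ring
  have hint : Integrable (fun x : ℝ => x ^ 2 * Real.exp (-(1/2) * x^2)
      - Real.exp (-(1/2) * x^2)) := integrable_sqexp'.sub integrable_expsq'
  have h := integral_of_hasDerivAt_of_tendsto hd hint
    (by simpa using xexp_lim_bot'.neg) (by simpa using xexp_lim_top'.neg)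
  rw [integral_sub integrable_sqexp' integrable_expsq'] at h
  rw [VE'] at h
  linarith

lemma VA' : ∫ x : ℝ, |x| * Real.exp (-(1/2) * x^2) = 2 := by
  have hIoi : ∫ x in Ioi (0:ℝ), x * Real.exp (-(1/2) * x^2) = 1 := by
    have h := integral_Ioi_of_hasDerivAt_of_tendsto' (a := 0)
      (f' := fun x => x * Real.exp (-(1/2) * x^2))
      (fun x _ => hd_exp' x) integrable_xexp'.integrableOn (by simpa using exp_lim_top'.neg)
    simpa using h
  have h : (fun x : ℝ => |x| * Real.exp (-(1/2) * x^2))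
      = fun x : ℝ => (fun t : ℝ => t * Real.exp (-(1/2) * t^2)) |x| := by
    funext x; simp [sq_abs]
  rw [h, integral_comp_abs (f := fun t : ℝ => t * Real.exp (-(1/2) * t^2)), hIoi]
  norm_num

end VolumeIntegrals

section GaussTransfer

lemma pdf01' (x : ℝ) : gaussianPDFReal 0 1 x
    = (Real.sqrt (2 * π))⁻¹ * Real.exp (-(1/2) * x^2) := by
  simp only [gaussianPDFReal, NNReal.coe_one, mul_one, sub_zero]
  congr 1
  ring_nf

lemma gauss_transfer' (g : ℝ → ℝ) :
    ∫ x, g x ∂(gaussianReal 0 1) = ∫ x, gaussianPDFReal 0 1 x * g x := by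
  rw [gaussianReal_of_var_ne_zero 0 one_ne_zero, gaussianPDF_def]
  have h : (fun x => ENNReal.ofReal (gaussianPDFReal 0 1 x))
      = fun x => ((gaussianPDFReal 0 1 x).toNNReal : ℝ≥0∞) := rfl
  rw [h, integral_withDensity_eq_integral_smul
    ((measurable_gaussianPDFReal 0 1).real_toNNReal) g]
  congr 1
  funext x
  rw [NNReal.smul_def, smul_eq_mul, Real.coe_toNNReal _ (gaussianPDFReal_nonneg _ _ _)]

lemma gauss_integrable' (g : ℝ → ℝ)
    (h : Integrable (fun x => gaussianPDFReal 0 1 x * g x) volume) :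
    Integrable g (gaussianReal 0 1) := by
  rw [gaussianReal_of_var_ne_zero 0 one_ne_zero, gaussianPDF_def]
  have heq : (fun x => ENNReal.ofReal (gaussianPDFReal 0 1 x))
      = fun x => ((gaussianPDFReal 0 1 x).toNNReal : ℝ≥0∞) := rfl
  rw [heq, integrable_withDensity_iff_integrable_smul
    ((measurable_gaussianPDFReal 0 1).real_toNNReal)]
  refine h.congr (Filter.Eventually.of_forall fun x => ?_)
  simp only [NNReal.smul_def, smul_eq_mul, Real.coe_toNNReal _ (gaussianPDFReal_nonneg 0 1 x)]

lemma sqrt2pi_pos : 0 < Real.sqrt (2 * π) := Real.sqrt_pos.mpr (by positivity)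

lemma gauss_mean' : ∫ x, x ∂(gaussianReal 0 1) = 0 := by
  rw [gauss_transfer']
  have : (fun x : ℝ => gaussianPDFReal 0 1 x * x)
      = fun x => (Real.sqrt (2 * π))⁻¹ * (x * Real.exp (-(1/2) * x^2)) := by
    funext x; rw [pdf01']; ring
  rw [this, integral_const_mul, V0', mul_zero]

lemma gauss_sq' : ∫ x, x ^ 2 ∂(gaussianReal 0 1) = 1 := by
  rw [gauss_transfer']
  have : (fun x : ℝ => gaussianPDFReal 0 1 x * x ^ 2)
      = fun x => (Real.sqrt (2 * π))⁻¹ * (x ^ 2 * Real.exp (-(1/2) * x^2)) := by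
    funext x; rw [pdf01']; ring
  rw [this, integral_const_mul, V2', inv_mul_cancel₀ (ne_of_gt sqrt2pi_pos)]

lemma gauss_abs' : ∫ x, |x| ∂(gaussianReal 0 1) = Real.sqrt (2 / π) := by
  rw [gauss_transfer']
  have : (fun x : ℝ => gaussianPDFReal 0 1 x * |x|)
      = fun x => (Real.sqrt (2 * π))⁻¹ * (|x| * Real.exp (-(1/2) * x^2)) := by
    funext x; rw [pdf01']; ring
  rw [this, integral_const_mul, VA']
  rw [show (2:ℝ) / π = 4 / (2 * π) by field_simp; ring]
  rw [Real.sqrt_div (by norm_num : (0:ℝ) ≤ 4),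
    show Real.sqrt 4 = 2 by rw [show (4:ℝ) = 2^2 by norm_num, Real.sqrt_sq (by norm_num)]]
  field_simp

lemma gauss_int_id' : Integrable (fun x : ℝ => x) (gaussianReal 0 1) := by
  apply gauss_integrable'
  have : (fun x : ℝ => gaussianPDFReal 0 1 x * x)
      = fun x => (Real.sqrt (2 * π))⁻¹ * (x * Real.exp (-(1/2) * x^2)) := by
    funext x; rw [pdf01']; ring
  rw [this]
  exact integrable_xexp'.const_mul _

lemma gauss_int_sq' : Integrable (fun x : ℝ => x ^ 2) (gaussianReal 0 1) := by
  apply gauss_integrable'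
  have : (fun x : ℝ => gaussianPDFReal 0 1 x * x ^ 2)
      = fun x => (Real.sqrt (2 * π))⁻¹ * (x ^ 2 * Real.exp (-(1/2) * x^2)) := by
    funext x; rw [pdf01']; ring
  rw [this]
  exact integrable_sqexp'.const_mul _

end GaussTransfer


/-- For independent standard Gaussians `G, S` and
`Y = BSC_ε(sign S)` with `ε ∈ [0, 1/2]`, and for the squared loss
`ℓ(t) = (t-1)²` (so `ℓ'(t) = 2(t-1)` and `prox_ℓ(x; λ) = (x+2λ)/(1+2λ)`),
the system
`E[YS ℓ'(prox(αG+μSY;λ))] = 0`, `λ²δ E[ℓ'(prox(αG+μSY;λ))²] = α²`,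
`λδ E[G ℓ'(prox(αG+μSY;λ))] = α`
is, for `δ > 1`, solved by `μ = (1-2ε)√(2/π)`, `λ = 1/(2(δ-1))`,
`α = √((1 - (2/π)(1-2ε)²)/(δ-1))`. -/
theorem squared_loss_system_solution
    {Ω : Type*} [MeasurableSpace Ω] (P : Measure Ω) [IsProbabilityMeasure P]
    (G S B Y : Ω → ℝ) (hG : Measurable G) (hS : Measurable S) (hB : Measurable B)
    (hGlaw : Measure.map G P = gaussianReal 0 1)
    (hSlaw : Measure.map S P = gaussianReal 0 1)
    (hGS : IndepFun G S P)
    (hBind : IndepFun B (fun ω => (G ω, S ω)) P)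
    (ε : ℝ) (hε : ε ∈ Set.Icc (0 : ℝ) (1 / 2))
    (hBval : ∀ ω, B ω = 1 ∨ B ω = -1)
    (hBflip : P {ω | B ω = -1} = ENNReal.ofReal ε)
    (hY : ∀ ω, Y ω = B ω * Real.sign (S ω))
    (δ : ℝ) (hδ : 1 < δ)
    (μ lam α : ℝ)
    (hμ : μ = (1 - 2 * ε) * Real.sqrt (2 / Real.pi))
    (hlam : lam = 1 / (2 * (δ - 1)))
    (hα : α = Real.sqrt ((1 - (2 / Real.pi) * (1 - 2 * ε) ^ 2) / (δ - 1))) :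
    (∫ ω, Y ω * S ω *
        (2 * ((α * G ω + μ * S ω * Y ω + 2 * lam) / (1 + 2 * lam) - 1)) ∂P)
      = 0 ∧
    lam ^ 2 * δ *
      (∫ ω, (2 * ((α * G ω + μ * S ω * Y ω + 2 * lam) / (1 + 2 * lam) - 1)) ^ 2 ∂P)
      = α ^ 2 ∧
    lam * δ *
      (∫ ω, G ω *
        (2 * ((α * G ω + μ * S ω * Y ω + 2 * lam) / (1 + 2 * lam) - 1)) ∂P)
      = α := by
  have hπ : (0:ℝ) < π := Real.pi_pos
  have hδ1 : δ - 1 ≠ 0 := by intro h; linarith [sub_eq_zero.mp h]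
  have hδ1' : (0:ℝ) < δ - 1 := by linarith
  have hδ0 : δ ≠ 0 := by intro h; linarith
  have hcδ : 1 + 2 * lam = δ / (δ - 1) := by rw [hlam]; field_simp; ring
  have hc0 : 1 + 2 * lam ≠ 0 := by rw [hcδ]; positivity
  -- moments of G
  have iG : Integrable G P := by
    have h1 := gauss_int_id'
    rw [← hGlaw] at h1
    exact (integrable_map_measure measurable_id.aestronglyMeasurable hG.aemeasurable).mp h1
  have iG2 : Integrable (fun ω => G ω ^ 2) P := by
    have h1 := gauss_int_sq'
    rw [← hGlaw] at h1
    exact (integrable_map_measure (measurable_id.pow_const 2).aestronglyMeasurable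
      hG.aemeasurable).mp h1
  have iS : Integrable S P := by
    have h1 := gauss_int_id'
    rw [← hSlaw] at h1
    exact (integrable_map_measure measurable_id.aestronglyMeasurable hS.aemeasurable).mp h1
  have iS2 : Integrable (fun ω => S ω ^ 2) P := by
    have h1 := gauss_int_sq'
    rw [← hSlaw] at h1
    exact (integrable_map_measure (measurable_id.pow_const 2).aestronglyMeasurable
      hS.aemeasurable).mp h1
  have iabsS : Integrable (fun ω => |S ω|) P := iS.abs
  have mG : ∫ ω, G ω ∂P = 0 := by
    have h := integral_map (μ := P) (φ := G) (f := fun x : ℝ => x) hG.aemeasurable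
      measurable_id.aestronglyMeasurable
    rw [hGlaw, gauss_mean'] at h
    exact h.symm
  have mG2 : ∫ ω, G ω ^ 2 ∂P = 1 := by
    have h := integral_map (μ := P) (φ := G) (f := fun x : ℝ => x ^ 2) hG.aemeasurable
      (measurable_id.pow_const 2).aestronglyMeasurable
    rw [hGlaw, gauss_sq'] at h
    exact h.symm
  have mS2 : ∫ ω, S ω ^ 2 ∂P = 1 := by
    have h := integral_map (μ := P) (φ := S) (f := fun x : ℝ => x ^ 2) hS.aemeasurable
      (measurable_id.pow_const 2).aestronglyMeasurable
    rw [hSlaw, gauss_sq'] at h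
    exact h.symm
  have mabsS : ∫ ω, |S ω| ∂P = Real.sqrt (2 / π) := by
    have h := integral_map (μ := P) (φ := S) (f := fun x : ℝ => |x|) hS.aemeasurable
      measurable_abs.aestronglyMeasurable
    rw [hSlaw, gauss_abs'] at h
    exact h.symm
  -- B moments
  have hmset : MeasurableSet {ω | B ω = -1} := hB (measurableSet_singleton (-1))
  have hBrep : B = fun ω => 1 - 2 * Set.indicator {ω | B ω = -1} (fun _ => (1:ℝ)) ω := by
    funext ω
    rcases hBval ω with h | h
    · have : ω ∉ {ω | B ω = -1} := by simp [h]; norm_num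
      simp [Set.indicator_of_notMem this, h]
    · have : ω ∈ {ω | B ω = -1} := h
      simp [Set.indicator_of_mem this, h]
      norm_num
  have iInd : Integrable (Set.indicator {ω | B ω = -1} (fun _ => (1:ℝ))) P :=
    (integrable_const (1:ℝ)).indicator hmset
  have iB : Integrable B P := by
    rw [hBrep]
    exact (integrable_const 1).sub (iInd.const_mul 2)
  have mB : ∫ ω, B ω ∂P = 1 - 2 * ε := by
    rw [hBrep]
    rw [integral_sub (integrable_const 1) (iInd.const_mul 2), integral_const_mul,
      integral_indicator hmset, setIntegral_const, measureReal_def, hBflip,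
      ENNReal.toReal_ofReal hε.1, integral_const]
    simp [measure_univ]
  -- independence products
  have hIGabs : IndepFun G (fun ω => |S ω|) P :=
    hGS.comp measurable_id measurable_abs
  have iGabsS : Integrable (fun ω => G ω * |S ω|) P := hIGabs.integrable_mul iG iabsS
  have mGabsS : ∫ ω, G ω * |S ω| ∂P = 0 := by
    have h : ∫ ω, G ω * |S ω| ∂P = (∫ ω, G ω ∂P) * ∫ ω, |S ω| ∂P :=
      hIGabs.integral_fun_mul_eq_mul_integral iG.aestronglyMeasurable iabsS.aestronglyMeasurable
    rw [h, mG, zero_mul]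
  have hIB1 : IndepFun B (fun ω => G ω * |S ω|) P :=
    hBind.comp measurable_id (measurable_fst.mul measurable_snd.abs)
  have hIB2 : IndepFun B (fun ω => |S ω|) P :=
    hBind.comp measurable_id measurable_snd.abs
  have iBS : Integrable (fun ω => B ω * |S ω|) P := hIB2.integrable_mul iB iabsS
  have iBGS : Integrable (fun ω => B ω * (G ω * |S ω|)) P := hIB1.integrable_mul iB iGabsS
  have mBS : ∫ ω, B ω * |S ω| ∂P = μ := by
    have h : ∫ ω, B ω * |S ω| ∂P = (∫ ω, B ω ∂P) * ∫ ω, |S ω| ∂P :=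
      hIB2.integral_fun_mul_eq_mul_integral iB.aestronglyMeasurable iabsS.aestronglyMeasurable
    rw [h, mB, mabsS, hμ]
  have mBGS : ∫ ω, B ω * (G ω * |S ω|) ∂P = 0 := by
    have h : ∫ ω, B ω * (G ω * |S ω|) ∂P = (∫ ω, B ω ∂P) * ∫ ω, G ω * |S ω| ∂P :=
      hIB1.integral_fun_mul_eq_mul_integral iB.aestronglyMeasurable iGabsS.aestronglyMeasurable
    rw [h, mGabsS, mul_zero]
  -- pointwise identities
  have hZ : ∀ ω, S ω * Y ω = B ω * |S ω| := by
    intro ω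
    rw [hY ω]
    rcases lt_trichotomy (S ω) 0 with h | h | h
    · rw [Real.sign_of_neg h, abs_of_neg h]; ring
    · simp [h]
    · rw [Real.sign_of_pos h, abs_of_pos h]; ring
  have hX2 : ∀ ω, (B ω * |S ω|) * (B ω * |S ω|) = S ω ^ 2 := by
    intro ω
    have h1 : B ω * B ω = 1 := by rcases hBval ω with h | h <;> rw [h] <;> norm_num
    rw [show B ω * |S ω| * (B ω * |S ω|) = B ω * B ω * (|S ω| * |S ω|) by ring, h1,
      abs_mul_abs_self, one_mul, sq]
  -- master formula
  have master : ∀ k1 k2 k3 k4 k5 k6 : ℝ,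
      ∫ ω, (k1 * G ω + k2 * G ω ^ 2 + k3 * S ω ^ 2 + k4 * (B ω * |S ω|)
        + k5 * (B ω * (G ω * |S ω|)) + k6) ∂P
      = k2 + k3 + k4 * μ + k6 := by
    intro k1 k2 k3 k4 k5 k6
    have i1 : Integrable (fun ω => k1 * G ω) P := iG.const_mul k1
    have i2 : Integrable (fun ω => k2 * G ω ^ 2) P := iG2.const_mul k2
    have i3 : Integrable (fun ω => k3 * S ω ^ 2) P := iS2.const_mul k3
    have i4 : Integrable (fun ω => k4 * (B ω * |S ω|)) P := iBS.const_mul k4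
    have i5 : Integrable (fun ω => k5 * (B ω * (G ω * |S ω|))) P := iBGS.const_mul k5
    have i12 : Integrable (fun ω => k1 * G ω + k2 * G ω ^ 2) P := i1.add i2
    have i13 : Integrable (fun ω => k1 * G ω + k2 * G ω ^ 2 + k3 * S ω ^ 2) P := i12.add i3
    have i14 : Integrable (fun ω => k1 * G ω + k2 * G ω ^ 2 + k3 * S ω ^ 2
        + k4 * (B ω * |S ω|)) P := i13.add i4
    have i15 : Integrable (fun ω => k1 * G ω + k2 * G ω ^ 2 + k3 * S ω ^ 2
        + k4 * (B ω * |S ω|) + k5 * (B ω * (G ω * |S ω|))) P := i14.add i5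
    have A1 : ∫ ω, (k1 * G ω + k2 * G ω ^ 2 + k3 * S ω ^ 2 + k4 * (B ω * |S ω|)
          + k5 * (B ω * (G ω * |S ω|)) + k6) ∂P
        = (∫ ω, (k1 * G ω + k2 * G ω ^ 2 + k3 * S ω ^ 2 + k4 * (B ω * |S ω|)
          + k5 * (B ω * (G ω * |S ω|))) ∂P) + ∫ _ω, k6 ∂P :=
      integral_add i15 (integrable_const k6)
    have A2 : ∫ ω, (k1 * G ω + k2 * G ω ^ 2 + k3 * S ω ^ 2 + k4 * (B ω * |S ω|)
          + k5 * (B ω * (G ω * |S ω|))) ∂P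
        = (∫ ω, (k1 * G ω + k2 * G ω ^ 2 + k3 * S ω ^ 2 + k4 * (B ω * |S ω|)) ∂P)
          + ∫ ω, k5 * (B ω * (G ω * |S ω|)) ∂P := integral_add i14 i5
    have A3 : ∫ ω, (k1 * G ω + k2 * G ω ^ 2 + k3 * S ω ^ 2 + k4 * (B ω * |S ω|)) ∂P
        = (∫ ω, (k1 * G ω + k2 * G ω ^ 2 + k3 * S ω ^ 2) ∂P)
          + ∫ ω, k4 * (B ω * |S ω|) ∂P := integral_add i13 i4
    have A4 : ∫ ω, (k1 * G ω + k2 * G ω ^ 2 + k3 * S ω ^ 2) ∂P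
        = (∫ ω, (k1 * G ω + k2 * G ω ^ 2) ∂P) + ∫ ω, k3 * S ω ^ 2 ∂P := integral_add i12 i3
    have A5 : ∫ ω, (k1 * G ω + k2 * G ω ^ 2) ∂P
        = (∫ ω, k1 * G ω ∂P) + ∫ ω, k2 * G ω ^ 2 ∂P := integral_add i1 i2
    rw [A1, A2, A3, A4, A5, integral_const_mul, integral_const_mul, integral_const_mul,
      integral_const_mul, integral_const_mul, mG, mG2, mS2, mBS, mBGS, integral_const]
    simp [measure_univ]
  -- key algebraic facts
  have hμ2 : μ ^ 2 = (2 / π) * (1 - 2 * ε) ^ 2 := by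
    rw [hμ, mul_pow, Real.sq_sqrt (by positivity)]
    ring
  have hnn : 0 ≤ (1 - (2 / π) * (1 - 2 * ε) ^ 2) / (δ - 1) := by
    have h2π : 2 / π ≤ 1 := by
      rw [div_le_one hπ]
      linarith [Real.pi_gt_three]
    have hsq : (1 - 2 * ε) ^ 2 ≤ 1 := by nlinarith [hε.1, hε.2]
    have : (2 / π) * (1 - 2 * ε) ^ 2 ≤ 1 := by nlinarith [sq_nonneg (1 - 2*ε), hπ]
    apply div_nonneg (by linarith) (by linarith)
  have hα2 : α ^ 2 = (1 - (2 / π) * (1 - 2 * ε) ^ 2) / (δ - 1) := by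
    rw [hα, Real.sq_sqrt hnn]
  have h1μ : 1 - μ ^ 2 = (δ - 1) * α ^ 2 := by
    rw [hμ2, hα2]
    field_simp
  have hrw : ∀ u : ℝ, 2 * ((u + 2 * lam) / (1 + 2 * lam) - 1) = 2 / (1 + 2 * lam) * (u - 1) := by
    intro u
    field_simp
    ring
  refine ⟨?_, ?_, ?_⟩
  · -- equation 1
    have e1 : (∫ ω, Y ω * S ω *
          (2 * ((α * G ω + μ * S ω * Y ω + 2 * lam) / (1 + 2 * lam) - 1)) ∂P)
        = ∫ ω, ((0:ℝ) * G ω + 0 * G ω ^ 2 + (2 * μ / (1 + 2 * lam)) * S ω ^ 2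
            + (-(2 / (1 + 2 * lam))) * (B ω * |S ω|)
            + (2 * α / (1 + 2 * lam)) * (B ω * (G ω * |S ω|)) + 0) ∂P := by
      refine integral_congr_ae (Filter.Eventually.of_forall fun ω => ?_)
      dsimp only
      rw [show Y ω * S ω = B ω * |S ω| by rw [mul_comm]; exact hZ ω,
        mul_assoc μ (S ω) (Y ω), hZ ω, hrw]
      linear_combination (2 * μ / (1 + 2 * lam)) * hX2 ω
    rw [e1, master]
    ring
  · -- equation 2
    have e2 : (∫ ω, (2 * ((α * G ω + μ * S ω * Y ω + 2 * lam) / (1 + 2 * lam) - 1)) ^ 2 ∂P)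
        = ∫ ω, ((-(8 * α * (1 / (1 + 2 * lam)) ^ 2)) * G ω
            + (4 * α ^ 2 * (1 / (1 + 2 * lam)) ^ 2) * G ω ^ 2
            + (4 * μ ^ 2 * (1 / (1 + 2 * lam)) ^ 2) * S ω ^ 2
            + (-(8 * μ * (1 / (1 + 2 * lam)) ^ 2)) * (B ω * |S ω|)
            + (8 * α * μ * (1 / (1 + 2 * lam)) ^ 2) * (B ω * (G ω * |S ω|))
            + 4 * (1 / (1 + 2 * lam)) ^ 2) ∂P := by
      refine integral_congr_ae (Filter.Eventually.of_forall fun ω => ?_)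
      dsimp only
      rw [mul_assoc μ (S ω) (Y ω), hZ ω, hrw]
      linear_combination (4 * μ ^ 2 * (1 / (1 + 2 * lam)) ^ 2) * hX2 ω
    rw [e2, master]
    have hsum : (4 * α ^ 2 * (1 / (1 + 2 * lam)) ^ 2) + (4 * μ ^ 2 * (1 / (1 + 2 * lam)) ^ 2)
        + (-(8 * μ * (1 / (1 + 2 * lam)) ^ 2)) * μ + 4 * (1 / (1 + 2 * lam)) ^ 2
        = 4 * δ * α ^ 2 * (1 / (1 + 2 * lam)) ^ 2 := by
      have key : 4 * α ^ 2 + 4 * μ ^ 2 - 8 * μ * μ + 4 = 4 * δ * α ^ 2 := by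
        linear_combination 4 * h1μ
      calc (4 * α ^ 2 * (1 / (1 + 2 * lam)) ^ 2) + (4 * μ ^ 2 * (1 / (1 + 2 * lam)) ^ 2)
          + (-(8 * μ * (1 / (1 + 2 * lam)) ^ 2)) * μ + 4 * (1 / (1 + 2 * lam)) ^ 2
          = (4 * α ^ 2 + 4 * μ ^ 2 - 8 * μ * μ + 4) * (1 / (1 + 2 * lam)) ^ 2 := by ring
        _ = 4 * δ * α ^ 2 * (1 / (1 + 2 * lam)) ^ 2 := by rw [key]
    rw [hsum, hcδ, hlam]
    field_simp
    ring
  · -- equation 3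
    have e3 : (∫ ω, G ω *
          (2 * ((α * G ω + μ * S ω * Y ω + 2 * lam) / (1 + 2 * lam) - 1)) ∂P)
        = ∫ ω, ((-(2 / (1 + 2 * lam))) * G ω + (2 * α / (1 + 2 * lam)) * G ω ^ 2
            + (0:ℝ) * S ω ^ 2 + 0 * (B ω * |S ω|)
            + (2 * μ / (1 + 2 * lam)) * (B ω * (G ω * |S ω|)) + 0) ∂P := by
      refine integral_congr_ae (Filter.Eventually.of_forall fun ω => ?_)
      dsimp only
      rw [mul_assoc μ (S ω) (Y ω), hZ ω, hrw]
      ring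
    rw [e3, master]
    rw [hcδ, hlam]
    field_simp
    ring
end
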